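/- Let p ≥ 1 and n ≥ 1 be integers, let a, b be reals with p/2 + a + 1 > 0 and b > -1, let γ be a real with 0 ≤ γ < p/2 + a + 1, and let π(g) = (g+1)^{-(a+2)}(g/(g+1))^b. Then for every integer i ≥ 1, every w > 0 and every s > 0, setting z = w/(1+w): ∫_0^∞∫_0^∞ F(g,η;w,s) h_i(η)² (g+1)^γ π(g) dg dη = [(1-z)^{p/2-γ+a+1} / s^{p/2+n/2+1}] · ∫_0^1∫_0^∞ [t^{p/2-γ+a} (1-t)^b / (1-zt)^{p/2-γ+a+b+2}] · v^{p/2+n/2} exp(-v/(2(1-zt))) · h_i(v/s)² dv dt. -/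

import Mathlib

open MeasureTheory Real Set

/-- The kernel `F(g,η;w,s)`. -/
noncomputable def Fker (p n : ℕ) (g η w s : ℝ) : ℝ :=
  η ^ ((p : ℝ) / 2 + (n : ℝ) / 2) * (g + 1) ^ (-(p : ℝ) / 2) *
    Real.exp (-(η * s / 2) * (w / (g + 1) + 1))

/-- The sequence `h_i(η) = i/(i + |log η|)`. -/
noncomputable def hfun (i : ℕ) (η : ℝ) : ℝ :=
  (i : ℝ) / ((i : ℝ) + |Real.log η|)

/-- The prior `π(g) = (g+1)^{-(a+2)} (g/(g+1))^b`. -/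
noncomputable def priorPi (a b g : ℝ) : ℝ :=
  (g + 1) ^ (-(a + 2)) * (g / (g + 1)) ^ b

/-- Change-of-variables identity (Part 1 of Lemma B.5 of the paper). -/
theorem change_of_variables_identity (p n : ℕ) (hp : 1 ≤ p) (hn : 1 ≤ n)
    (a b : ℝ) (hpa : (p : ℝ) / 2 + a + 1 > 0) (hb : -1 < b)
    (γ : ℝ) (hγ0 : 0 ≤ γ) (hγ1 : γ < (p : ℝ) / 2 + a + 1)
    (i : ℕ) (hi : 1 ≤ i) (w s : ℝ) (hw : 0 < w) (hs : 0 < s) :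
    (∫ g in Ioi (0 : ℝ), ∫ η in Ioi (0 : ℝ),
        Fker p n g η w s * (hfun i η) ^ 2 * (g + 1) ^ γ * priorPi a b g)
      = (1 - w / (1 + w)) ^ ((p : ℝ) / 2 - γ + a + 1) / s ^ ((p : ℝ) / 2 + (n : ℝ) / 2 + 1) *
        ∫ t in Ioo (0 : ℝ) 1, ∫ v in Ioi (0 : ℝ),
          (t ^ ((p : ℝ) / 2 - γ + a) * (1 - t) ^ b /
              (1 - (w / (1 + w)) * t) ^ ((p : ℝ) / 2 - γ + a + b + 2)) *
            v ^ ((p : ℝ) / 2 + (n : ℝ) / 2) *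
            Real.exp (-v / (2 * (1 - (w / (1 + w)) * t))) * (hfun i (v / s)) ^ 2 := by
  have hw1 : (0:ℝ) < 1 + w := by linarith
  set c : ℝ := (p:ℝ)/2 + (n:ℝ)/2 with hc
  set β : ℝ := (p:ℝ)/2 - γ + a with hβ
  -- Step 0: inner substitution `v = s * η`.
  have inner : ∀ K : ℝ,
      (∫ η in Ioi (0:ℝ), η ^ c * Real.exp (-(η * s / 2) * K) * hfun i η ^ 2)
        = s ^ (-c) * s⁻¹ * ∫ v in Ioi (0:ℝ),
            v ^ c * Real.exp (-(v / 2) * K) * hfun i (v / s) ^ 2 := by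
    intro K
    have h0 := integral_comp_mul_left_Ioi
      (fun v => v ^ c * Real.exp (-(v / 2) * K) * hfun i (v / s) ^ 2) 0 hs
    rw [mul_zero, smul_eq_mul] at h0
    rw [mul_assoc, ← h0, ← integral_const_mul]
    refine setIntegral_congr_fun measurableSet_Ioi fun x hx => ?_
    have hx0 : (0:ℝ) < x := hx
    rw [mul_div_cancel_left₀ _ hs.ne', Real.mul_rpow hs.le hx0.le,
      show -(s * x / 2) * K = -(x * s / 2) * K by ring]
    have hss : s ^ (-c) * s ^ c = 1 := by
      rw [← Real.rpow_add hs, neg_add_cancel, Real.rpow_zero]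
    linear_combination (-(x ^ c * Real.exp (-(x * s / 2) * K) * hfun i x ^ 2)) * hss
  -- Step 1: the LHS equals a middle form.
  have hL : (∫ g in Ioi (0 : ℝ), ∫ η in Ioi (0 : ℝ),
        Fker p n g η w s * (hfun i η) ^ 2 * (g + 1) ^ γ * priorPi a b g)
      = ∫ g in Ioi (0:ℝ), g ^ b * (g + 1) ^ (-(β + b + 2)) *
          (s ^ (-c) * s⁻¹ * ∫ v in Ioi (0:ℝ),
            v ^ c * Real.exp (-(v / 2) * (w / (g + 1) + 1)) * hfun i (v / s) ^ 2) := by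
    refine setIntegral_congr_fun measurableSet_Ioi fun g hg => ?_
    have hg0 : (0:ℝ) < g := hg
    have hg1 : (0:ℝ) < g + 1 := by linarith
    have e : ∀ η : ℝ, Fker p n g η w s * hfun i η ^ 2 * (g + 1) ^ γ * priorPi a b g
        = ((g + 1) ^ (-(p:ℝ) / 2) * (g + 1) ^ γ * priorPi a b g)
          * (η ^ c * Real.exp (-(η * s / 2) * (w / (g + 1) + 1)) * hfun i η ^ 2) := by
      intro η; simp only [Fker]; rw [← hc]; ring
    simp only [e]
    rw [integral_const_mul, inner]
    have keyL : (g + 1) ^ (-(p:ℝ) / 2) * (g + 1) ^ γ * priorPi a b g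
        = g ^ b * (g + 1) ^ (-(β + b + 2)) := by
      simp only [priorPi]
      have hq : (0:ℝ) < g / (g + 1) := div_pos hg0 hg1
      simp only [Real.rpow_def_of_pos hg1, Real.rpow_def_of_pos hq, Real.rpow_def_of_pos hg0,
        Real.log_div hg0.ne' hg1.ne', ← Real.exp_add]
      rw [Real.exp_eq_exp, hβ]
      ring
    rw [keyL]
  rw [hL]
  -- Step 2: the substitution `t = (1+w)/(g+1+w)`.
  have himg : (fun x : ℝ => (1 + w) / (x + 1 + w)) '' Ioi 0 = Ioo (0:ℝ) 1 := by
    ext t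
    simp only [mem_image, mem_Ioi, mem_Ioo]
    constructor
    · rintro ⟨x, hx, rfl⟩
      have hxw : (0:ℝ) < x + 1 + w := by linarith
      exact ⟨div_pos hw1 hxw, by rw [div_lt_one hxw]; linarith⟩
    · rintro ⟨ht0, ht1⟩
      have h1t : (0:ℝ) < 1 - t := by linarith
      refine ⟨(1 + w) * (1 - t) / t, div_pos (mul_pos hw1 h1t) ht0, ?_⟩
      rw [div_eq_iff (by positivity)]
      field_simp
      ring
  have hderiv : ∀ x ∈ Ioi (0:ℝ), HasDerivWithinAt (fun x : ℝ => (1 + w) / (x + 1 + w))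
      (-(1 + w) / (x + 1 + w) ^ 2) (Ioi 0) x := by
    intro x hx
    have hxw : (0:ℝ) < x + 1 + w := by have : (0:ℝ) < x := hx; linarith
    have h1 : HasDerivAt (fun x : ℝ => x + 1 + w) 1 x := by
      simpa using ((hasDerivAt_id x).add_const 1).add_const w
    have h2 : HasDerivAt (fun x : ℝ => (1 + w) / (x + 1 + w))
        ((0 * (x + 1 + w) - (1 + w) * 1) / (x + 1 + w) ^ 2) x :=
      (hasDerivAt_const x (1 + w)).div h1 hxw.ne'
    have h3 : (0 * (x + 1 + w) - (1 + w) * 1) / (x + 1 + w) ^ 2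
        = -(1 + w) / (x + 1 + w) ^ 2 := by ring
    exact (h3 ▸ h2).hasDerivWithinAt
  have hinj : InjOn (fun x : ℝ => (1 + w) / (x + 1 + w)) (Ioi 0) := by
    intro x hx y hy hxy
    have hx' : (0:ℝ) < x + 1 + w := by have : (0:ℝ) < x := hx; linarith
    have hy' : (0:ℝ) < y + 1 + w := by have : (0:ℝ) < y := hy; linarith
    simp only [div_eq_div_iff hx'.ne' hy'.ne'] at hxy
    nlinarith [hxy]
  rw [← himg, integral_image_eq_integral_abs_deriv_smul measurableSet_Ioi hderiv hinj,
    ← integral_const_mul]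
  refine setIntegral_congr_fun measurableSet_Ioi fun g hg => ?_
  have hg0 : (0:ℝ) < g := hg
  have hg1 : (0:ℝ) < g + 1 := by linarith
  have hgw : (0:ℝ) < g + 1 + w := by linarith
  simp only [smul_eq_mul]
  have hzphi : (1:ℝ) - w / (1 + w) * ((1 + w) / (g + 1 + w)) = (g + 1) / (g + 1 + w) := by
    field_simp
    ring
  have hIn : (∫ v in Ioi (0:ℝ),
        ((1 + w) / (g + 1 + w)) ^ β * (1 - (1 + w) / (g + 1 + w)) ^ b /
              (1 - w / (1 + w) * ((1 + w) / (g + 1 + w))) ^ (β + b + 2) * v ^ c *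
            Real.exp (-v / (2 * (1 - w / (1 + w) * ((1 + w) / (g + 1 + w))))) *
          hfun i (v / s) ^ 2)
      = ((1 + w) / (g + 1 + w)) ^ β * (1 - (1 + w) / (g + 1 + w)) ^ b /
            (1 - w / (1 + w) * ((1 + w) / (g + 1 + w))) ^ (β + b + 2) *
          ∫ v in Ioi (0:ℝ), v ^ c * Real.exp (-(v / 2) * (w / (g + 1) + 1)) * hfun i (v / s) ^ 2 := by
    rw [← integral_const_mul]
    refine setIntegral_congr_fun measurableSet_Ioi fun v hv => ?_
    have harg : -v / (2 * (1 - w / (1 + w) * ((1 + w) / (g + 1 + w))))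
        = -(v / 2) * (w / (g + 1) + 1) := by
      rw [hzphi]
      field_simp
      try ring
      try tauto
    rw [harg]
    ring
  rw [hIn]
  have habs : |-(1 + w) / (g + 1 + w) ^ 2| = (1 + w) / (g + 1 + w) ^ 2 := by
    rw [abs_div, abs_neg, abs_of_pos hw1, abs_of_pos (by positivity : (0:ℝ) < (g + 1 + w) ^ 2)]
  rw [habs]
  have hz : (1:ℝ) - w / (1 + w) = 1 / (1 + w) := by field_simp; ring
  have hphi : (1:ℝ) - (1 + w) / (g + 1 + w) = g / (g + 1 + w) := by
    field_simp
    ring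
  have key : (1 - w / (1 + w)) ^ (β + 1) / s ^ (c + 1) *
        ((1 + w) / (g + 1 + w) ^ 2 *
          (((1 + w) / (g + 1 + w)) ^ β * (1 - (1 + w) / (g + 1 + w)) ^ b /
            (1 - w / (1 + w) * ((1 + w) / (g + 1 + w))) ^ (β + b + 2)))
      = g ^ b * (g + 1) ^ (-(β + b + 2)) * (s ^ (-c) * s⁻¹) := by
    rw [hz, hphi, hzphi, one_div, Real.inv_rpow hw1.le,
      Real.div_rpow hw1.le hgw.le, Real.div_rpow hg0.le hgw.le, Real.div_rpow hg1.le hgw.le]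
    simp only [Real.rpow_add hw1, Real.rpow_add hg1, Real.rpow_add hgw, Real.rpow_add hs,
      Real.rpow_neg hg1.le, Real.rpow_neg hs.le, Real.rpow_one, Real.rpow_two]
    have h1 : ((1 + w) ^ β) ≠ 0 := (Real.rpow_pos_of_pos hw1 β).ne'
    have h2 : ((g + 1 + w) ^ β) ≠ 0 := (Real.rpow_pos_of_pos hgw β).ne'
    have h3 : ((g + 1 + w) ^ b) ≠ 0 := (Real.rpow_pos_of_pos hgw b).ne'
    have h4 : ((g + 1) ^ β) ≠ 0 := (Real.rpow_pos_of_pos hg1 β).ne'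
    have h5 : ((g + 1) ^ b) ≠ 0 := (Real.rpow_pos_of_pos hg1 b).ne'
    have h6 : (s ^ c) ≠ 0 := (Real.rpow_pos_of_pos hs c).ne'
    field_simp
  linear_combination
    (-(∫ v in Ioi (0:ℝ), v ^ c * Real.exp (-(v / 2) * (w / (g + 1) + 1)) * hfun i (v / s) ^ 2)) * key
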